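/- lim_{N→∞} (1/N) ∑_{n=1}^{N} φ(n)/n = 6/π². -/

import Mathlib

open Filter Topology Real

private lemma moeb_summable : Summable (fun d : ℕ => (ArithmeticFunction.moebius d : ℝ) / (d : ℝ) ^ 2) := by
  apply Summable.of_norm_bounded (g := fun d : ℕ => 1 / (d : ℝ) ^ 2)
    (summable_one_div_nat_pow.mpr one_lt_two)
  intro d
  rcases Nat.eq_zero_or_pos d with rfl | hd
  · simp
  · have hd2 : (0:ℝ) ≤ (d:ℝ)^2 := by positivity
    rw [norm_div, norm_pow, Real.norm_natCast, Real.norm_eq_abs]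
    gcongr
    exact_mod_cast (ArithmeticFunction.abs_moebius_le_one (n := d))

private lemma moeb_tsum : ∑' d : ℕ, (ArithmeticFunction.moebius d : ℝ) / (d : ℝ) ^ 2 = 6 / π ^ 2 := by
  have h2 : (1:ℝ) < (2:ℂ).re := by norm_num
  have hmul := ArithmeticFunction.LSeries_zeta_mul_Lseries_moebius (s := 2) h2
  rw [ArithmeticFunction.LSeries_zeta_eq_riemannZeta h2, riemannZeta_two] at hmul
  have hπ : ((π:ℂ))^2 ≠ 0 := by
    simpa using Complex.ofReal_ne_zero.mpr Real.pi_ne_zero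
  have hL : LSeries (fun n => (ArithmeticFunction.moebius n : ℂ)) 2 = 6 / (π:ℂ)^2 := by
    rw [eq_div_iff hπ]
    linear_combination 6 * hmul
  have hterm : LSeries (fun n => (ArithmeticFunction.moebius n : ℂ)) 2
      = ∑' d : ℕ, (ArithmeticFunction.moebius d : ℂ) / (d : ℂ) ^ 2 := by
    apply tsum_congr
    intro n
    rcases eq_or_ne n 0 with rfl | hn
    · simp
    · rw [LSeries.term_of_ne_zero hn]
      norm_num [Complex.cpow_natCast (n : ℂ) 2]
  have : ((∑' d : ℕ, (ArithmeticFunction.moebius d : ℝ) / (d : ℝ) ^ 2 : ℝ) : ℂ)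
      = ((6 / π ^ 2 : ℝ) : ℂ) := by
    rw [Complex.ofReal_tsum]
    push_cast
    rw [← hterm, hL]
  exact_mod_cast this

private lemma floor_div_tendsto {d : ℕ} (hd : 0 < d) :
    Tendsto (fun N : ℕ => ((N / d : ℕ) : ℝ) / N) atTop (𝓝 (1 / d)) := by
  have hd' : (0:ℝ) < d := by exact_mod_cast hd
  apply tendsto_of_tendsto_of_tendsto_of_le_of_le'
    (g := fun N : ℕ => 1/(d:ℝ) - 1/N) (h := fun _ : ℕ => 1/(d:ℝ))
  · simpa using (tendsto_const_nhds (x := 1/(d:ℝ)) (f := atTop)).sub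
      tendsto_one_div_atTop_nhds_zero_nat
  · exact tendsto_const_nhds
  · filter_upwards [eventually_ge_atTop 1] with N hN
    have hN' : (0:ℝ) < N := by exact_mod_cast hN
    have h1 : (N:ℝ) < (N/d : ℕ) * d + d := by exact_mod_cast Nat.lt_div_mul_add hd
    rw [div_sub_div _ _ (ne_of_gt hd') (ne_of_gt hN'), div_le_div_iff₀ (by positivity) hN']
    nlinarith
  · filter_upwards [eventually_ge_atTop 1] with N hN
    have hN' : (0:ℝ) < N := by exact_mod_cast hN
    have h2 : ((N/d : ℕ):ℝ) * d ≤ N := by exact_mod_cast Nat.div_mul_le_self N d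
    rw [div_le_div_iff₀ hN' hd']
    nlinarith

private lemma totient_div_eq {n : ℕ} (hn : 0 < n) :
    (Nat.totient n : ℝ) / n = ∑ d ∈ n.divisors, (ArithmeticFunction.moebius d : ℝ) / d := by
  have key : ∀ m > 0, ∑ x ∈ m.divisorsAntidiagonal,
      (ArithmeticFunction.moebius x.fst : ℝ) * (x.snd : ℝ) = (Nat.totient m : ℝ) := by
    apply (ArithmeticFunction.sum_eq_iff_sum_mul_moebius_eq
      (f := fun i => (Nat.totient i : ℝ)) (g := fun m => (m : ℝ))).mp
    intro m _
    exact_mod_cast congrArg (Nat.cast (R := ℝ)) (Nat.sum_totient m)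
  have h2 : (Nat.totient n : ℝ)
      = ∑ d ∈ n.divisors, (ArithmeticFunction.moebius d : ℝ) * ((n / d : ℕ) : ℝ) := by
    rw [← key n hn, Nat.sum_divisorsAntidiagonal
      (fun x y => (ArithmeticFunction.moebius x : ℝ) * (y : ℝ))]
  rw [h2, Finset.sum_div]
  apply Finset.sum_congr rfl
  intro d hd
  obtain ⟨hdvd, hn0⟩ := Nat.mem_divisors.mp hd
  have hd0 : (d:ℝ) ≠ 0 := Nat.cast_ne_zero.mpr (fun h => by subst h; simp at hdvd; omega)
  have hn0' : (n:ℝ) ≠ 0 := Nat.cast_ne_zero.mpr hn0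
  rw [Nat.cast_div hdvd hd0]
  field_simp

private lemma swap_sum (N : ℕ) (c : ℕ → ℝ) :
    ∑ n ∈ Finset.Icc 1 N, ∑ d ∈ n.divisors, c d
      = ∑ d ∈ Finset.Icc 1 N, ((N / d : ℕ) : ℝ) * c d := by
  have h1 : ∀ n ∈ Finset.Icc 1 N, ∑ d ∈ n.divisors, c d
      = ∑ d ∈ Finset.Icc 1 N, if d ∣ n then c d else 0 := by
    intro n hn
    rw [Finset.mem_Icc] at hn
    rw [Finset.sum_ite, Finset.sum_const_zero, add_zero]
    apply Finset.sum_congr ?_ (fun _ _ => rfl)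
    ext d
    simp only [Finset.mem_filter, Finset.mem_Icc, Nat.mem_divisors]
    constructor
    · rintro ⟨hdvd, hn0⟩
      exact ⟨⟨Nat.pos_of_dvd_of_pos hdvd (by omega),
        le_trans (Nat.le_of_dvd (by omega) hdvd) hn.2⟩, hdvd⟩
    · rintro ⟨⟨_, _⟩, hdvd⟩
      exact ⟨hdvd, by omega⟩
  rw [Finset.sum_congr rfl h1, Finset.sum_comm]
  apply Finset.sum_congr rfl
  intro d _
  rw [Finset.sum_ite, Finset.sum_const_zero, add_zero, Finset.sum_const, nsmul_eq_mul]
  congr 1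
  have : Finset.Icc 1 N = Finset.Ioc 0 N := rfl
  rw [this]
  exact_mod_cast congrArg (Nat.cast (R := ℝ)) (Nat.Ioc_filter_dvd_card_eq_div N d)

theorem stmt8 :
    Tendsto (fun N : ℕ => (∑ n ∈ Finset.Icc 1 N, (Nat.totient n : ℝ) / n) / N)
      atTop (𝓝 (6 / π ^ 2)) := by
  set F : ℕ → ℕ → ℝ := fun N d =>
    (ArithmeticFunction.moebius d : ℝ) * ((N / d : ℕ) : ℝ) / (d * N) with hF
  have key : Tendsto (fun N => ∑' d, F N d) atTop
      (𝓝 (∑' d : ℕ, (ArithmeticFunction.moebius d : ℝ) / (d : ℝ) ^ 2)) := by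
    apply tendsto_tsum_of_dominated_convergence (bound := fun d : ℕ => 1/(d:ℝ)^2)
      (summable_one_div_nat_pow.mpr one_lt_two)
    · intro d
      rcases Nat.eq_zero_or_pos d with rfl | hd
      · simpa [hF] using tendsto_const_nhds
      · have hconv := (floor_div_tendsto hd).const_mul ((ArithmeticFunction.moebius d : ℝ) / d)
        have heq : ((ArithmeticFunction.moebius d : ℝ) / d) * (1 / d)
            = (ArithmeticFunction.moebius d : ℝ) / (d:ℝ)^2 := by ring
        rw [heq] at hconv
        apply hconv.congr
        intro N
        simp only [hF]
        ring
    · filter_upwards [eventually_ge_atTop 1] with N hN d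
      rcases Nat.eq_zero_or_pos d with rfl | hd
      · simp [hF]
      have hd' : (0:ℝ) < d := by exact_mod_cast hd
      have hN' : (0:ℝ) < N := by exact_mod_cast hN
      have h2 : ((N/d : ℕ):ℝ) * d ≤ N := by exact_mod_cast Nat.div_mul_le_self N d
      have hμ : |(ArithmeticFunction.moebius d : ℝ)| ≤ 1 := by
        exact_mod_cast (ArithmeticFunction.abs_moebius_le_one (n := d))
      rw [hF]
      simp only [Real.norm_eq_abs, abs_div, abs_mul, Nat.abs_cast]
      rw [div_le_div_iff₀ (by positivity) (by positivity)]
      have hfl : (0:ℝ) ≤ ((N/d : ℕ):ℝ) := by positivity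
      have e1 : |(ArithmeticFunction.moebius d : ℝ)| * (((N/d : ℕ):ℝ) * (d:ℝ)^2)
          ≤ 1 * (((N/d : ℕ):ℝ) * (d:ℝ)^2) :=
        mul_le_mul_of_nonneg_right hμ (by positivity)
      have e2 : (((N/d : ℕ):ℝ) * (d:ℝ)) * d ≤ (N:ℝ) * d :=
        mul_le_mul_of_nonneg_right h2 (le_of_lt hd')
      nlinarith [e1, e2]
  rw [moeb_tsum] at key
  apply key.congr'
  filter_upwards [eventually_ge_atTop 1] with N hN
  have hsum : ∑' d, F N d = ∑ d ∈ Finset.Icc 1 N, F N d := by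
    apply tsum_eq_sum
    intro d hd
    rw [Finset.mem_Icc] at hd
    push_neg at hd
    rcases Nat.eq_zero_or_pos d with rfl | hd0
    · simp [hF]
    · have : N < d := hd hd0
      simp [hF, Nat.div_eq_of_lt this]
  rw [hsum]
  have hid : ∑ n ∈ Finset.Icc 1 N, (Nat.totient n : ℝ) / n
      = ∑ d ∈ Finset.Icc 1 N, ((N / d : ℕ) : ℝ) * ((ArithmeticFunction.moebius d : ℝ) / d) := by
    rw [← swap_sum N (fun d => (ArithmeticFunction.moebius d : ℝ) / d)]
    apply Finset.sum_congr rfl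
    intro n hn
    rw [Finset.mem_Icc] at hn
    exact totient_div_eq (by omega)
  rw [hid, Finset.sum_div]
  apply Finset.sum_congr rfl
  intro d _
  rw [hF]
  ring
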